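/- Let Γ̂ be a δ-hyperbolic spider's web whose counting measure satisfies c·a^r ≤ μ(B_r(x)) ≤ C·b^r for all vertices x and r ≥ 1, where 1 < a ≤ b < a². Then there exists a constant C' such that for every nonnegative integer r and all subsets E, F of the vertices of Γ̂, a^{−r}·#{(x,y) ∈ E × F : d_{Γ̂}(x,y) ≤ r} ≤ C'·(√b/a)^r·√(#E · #F). -/

import Mathlib

/-- A spider's web: a graph `G` obtained from a rooted tree `T` (root `o`,
predecessor map `p`, level function `lvl`) by adding edges, such that added edges
only join vertices of the same level, and two same-level neighbours have
predecessors that coincide or are neighbours. -/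
structure SpiderWeb (V : Type*) where
  G : SimpleGraph V
  T : SimpleGraph V
  o : V
  p : V → V
  lvl : V → ℕ
  lvl_root : lvl o = 0
  root_eq : ∀ x, lvl x = 0 → x = o
  p_lvl : ∀ x, x ≠ o → lvl (p x) + 1 = lvl x
  T_adj : ∀ x y, T.Adj x y ↔ (x ≠ o ∧ p x = y) ∨ (y ≠ o ∧ p y = x)
  T_le_G : T ≤ G
  T_connected : T.Connected
  adj_lvl : ∀ x y, G.Adj x y → ¬ T.Adj x y → lvl x = lvl y
  horiz : ∀ x y, G.Adj x y → lvl x = lvl y → p x = p y ∨ G.Adj (p x) (p y)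

namespace SWAux

variable {V : Type*}

lemma sw_conn (S : SpiderWeb V) : S.G.Connected := S.T_connected.mono S.T_le_G

lemma sw_adj_lvl (S : SpiderWeb V) {x y : V} (h : S.G.Adj x y) : S.lvl y ≤ S.lvl x + 1 := by
  by_cases ht : S.T.Adj x y
  · rcases (S.T_adj x y).1 ht with ⟨hx, hp⟩ | ⟨hy, hp⟩
    · have := S.p_lvl x hx; rw [hp] at this; omega
    · have := S.p_lvl y hy; rw [hp] at this; omega
  · rw [S.adj_lvl x y h ht]; omega

lemma sw_walk_lvl (S : SpiderWeb V) {x y : V} (w : S.G.Walk x y) :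
    S.lvl y ≤ S.lvl x + w.length := by
  induction w with
  | nil => simp
  | @cons u v z h q ih =>
      have h2 := sw_adj_lvl S h
      simp only [SimpleGraph.Walk.length_cons]
      omega

lemma sw_dist_lvl (S : SpiderWeb V) (x y : V) : S.lvl y ≤ S.lvl x + S.G.dist x y := by
  obtain ⟨w, hw⟩ := (sw_conn S).exists_walk_length_eq_dist x y
  have := sw_walk_lvl S w
  omega

lemma sw_ne_root (S : SpiderWeb V) {z : V} (h : S.lvl z ≠ 0) : z ≠ o → True := fun _ => trivial

lemma sw_iter_lvl (S : SpiderWeb V) (x : V) :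
    ∀ j, j ≤ S.lvl x → S.lvl (S.p^[j] x) = S.lvl x - j := by
  intro j
  induction j with
  | zero => intro _; simp
  | succ n ih =>
      intro hj
      have hn := ih (by omega)
      have hz : S.p^[n] x ≠ S.o := by
        intro he
        have : S.lvl (S.p^[n] x) = 0 := by rw [he, S.lvl_root]
        omega
      have := S.p_lvl _ hz
      rw [Function.iterate_succ_apply']
      omega

lemma sw_iter_dist (S : SpiderWeb V) (x : V) :
    ∀ j, j ≤ S.lvl x → S.G.dist x (S.p^[j] x) ≤ j := by
  intro j
  induction j with
  | zero => simp
  | succ n ih =>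
      intro hj
      have hn := ih (by omega)
      have hlv := sw_iter_lvl S x n (by omega)
      have hz : S.p^[n] x ≠ S.o := by
        intro he
        have : S.lvl (S.p^[n] x) = 0 := by rw [he, S.lvl_root]
        omega
      have hadj : S.T.Adj (S.p^[n] x) (S.p (S.p^[n] x)) :=
        (S.T_adj _ _).2 (Or.inl ⟨hz, rfl⟩)
      have hadjG : S.G.Adj (S.p^[n] x) (S.p^[n+1] x) := by
        rw [Function.iterate_succ_apply']
        exact S.T_le_G hadj
      have h1 : S.G.dist (S.p^[n] x) (S.p^[n+1] x) ≤ 1 :=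
        SimpleGraph.dist_le hadjG.toWalk
      calc S.G.dist x (S.p^[n+1] x)
          ≤ S.G.dist x (S.p^[n] x) + S.G.dist (S.p^[n] x) (S.p^[n+1] x) :=
            (sw_conn S).dist_triangle
        _ ≤ n + 1 := by omega

lemma sw_dist_root (S : SpiderWeb V) (x : V) : S.G.dist S.o x = S.lvl x := by
  have hle : S.G.dist x (S.p^[S.lvl x] x) ≤ S.lvl x := sw_iter_dist S x (S.lvl x) le_rfl
  have hro : S.p^[S.lvl x] x = S.o := by
    apply S.root_eq
    have := sw_iter_lvl S x (S.lvl x) le_rfl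
    omega
  rw [hro] at hle
  have hge : S.lvl x ≤ S.lvl S.o + S.G.dist S.o x := sw_dist_lvl S S.o x
  rw [S.lvl_root] at hge
  have := SimpleGraph.dist_comm (G := S.G) (u := S.o) (v := x)
  omega

lemma sw_dist_anc (S : SpiderWeb V) (x : V) (j : ℕ) (hj : j ≤ S.lvl x) :
    S.G.dist x (S.p^[j] x) = j := by
  have hle := sw_iter_dist S x j hj
  have hlv := sw_iter_lvl S x j hj
  have hge := sw_dist_lvl S (S.p^[j] x) x
  have := SimpleGraph.dist_comm (G := S.G) (u := x) (v := S.p^[j] x)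
  omega

end SWAux

noncomputable def gromovProd {V : Type*} (d : V → V → ℕ) (x y w : V) : ℝ :=
  ((d w x : ℝ) + (d w y : ℝ) - (d x y : ℝ)) / 2

namespace SWAux

/-- Gromov product of a vertex with its own ancestor, basepoint the root. -/
lemma sw_gp_anc (S : SpiderWeb V) (x : V) (k : ℕ) (hk : k ≤ S.lvl x) :
    gromovProd S.G.dist x (S.p^[S.lvl x - k] x) S.o = k ∧
    gromovProd S.G.dist (S.p^[S.lvl x - k] x) x S.o = k := by
  have h1 : S.G.dist S.o x = S.lvl x := sw_dist_root S x
  have hlv : S.lvl (S.p^[S.lvl x - k] x) = k := by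
    have := sw_iter_lvl S x (S.lvl x - k) (Nat.sub_le _ _)
    omega
  have h2 : S.G.dist S.o (S.p^[S.lvl x - k] x) = k := by
    rw [sw_dist_root S _, hlv]
  have h3 : S.G.dist x (S.p^[S.lvl x - k] x) = S.lvl x - k :=
    sw_dist_anc S x _ (Nat.sub_le _ _)
  have h4 : S.G.dist (S.p^[S.lvl x - k] x) x = S.lvl x - k := by
    rw [SimpleGraph.dist_comm]; exact h3
  have hcast : ((S.lvl x - k : ℕ) : ℝ) = (S.lvl x : ℝ) - k := by
    exact Nat.cast_sub hk
  constructor <;>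
  · unfold gromovProd
    rw [h1, h2]
    first
      | rw [h3] | rw [h4]
    rw [hcast]
    ring

/-- In a δ-hyperbolic spider's web, ancestors at a common level below the
Gromov product are within 4δ of each other. -/
lemma sw_anc_close (S : SpiderWeb V) (δ : ℝ) (hδ : 0 ≤ δ)
    (hhyp : ∀ w x y z : V,
      gromovProd S.G.dist x z w ≥
        min (gromovProd S.G.dist x y w) (gromovProd S.G.dist y z w) - δ)
    (x y : V) (k : ℕ) (hkx : k ≤ S.lvl x) (hky : k ≤ S.lvl y)
    (hk : (k : ℝ) ≤ gromovProd S.G.dist x y S.o) :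
    (S.G.dist (S.p^[S.lvl x - k] x) (S.p^[S.lvl y - k] y) : ℝ) ≤ 4 * δ := by
  set u := S.p^[S.lvl x - k] x with hu
  set v := S.p^[S.lvl y - k] y with hv
  obtain ⟨-, hux⟩ := sw_gp_anc S x k hkx
  obtain ⟨hyv, -⟩ := sw_gp_anc S y k hky
  -- hux : (u | x)_o = k  ;  hyv : (y | v)_o = k
  have e2 := hhyp S.o x y v
  have e1 := hhyp S.o u x v
  rw [hyv] at e2
  rw [hux] at e1
  -- e2 : (x|v)_o ≥ min (x|y)_o k - δ
  have hxv : gromovProd S.G.dist x v S.o ≥ (k : ℝ) - δ := by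
    have : min (gromovProd S.G.dist x y S.o) ((k:ℝ)) ≥ (k:ℝ) := le_min hk le_rfl
    linarith
  have huv : gromovProd S.G.dist u v S.o ≥ (k : ℝ) - 2*δ := by
    have : min ((k:ℝ)) (gromovProd S.G.dist x v S.o) ≥ (k:ℝ) - δ :=
      le_min (by linarith) (by linarith)
    linarith
  have hou : S.G.dist S.o u = k := by
    rw [hu, sw_dist_root S _]
    have := sw_iter_lvl S x (S.lvl x - k) (Nat.sub_le _ _)
    omega
  have hov : S.G.dist S.o v = k := by
    rw [hv, sw_dist_root S _]
    have := sw_iter_lvl S y (S.lvl y - k) (Nat.sub_le _ _)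
    omega
  unfold gromovProd at huv
  rw [hou, hov] at huv
  linarith

end SWAux

namespace SWAux2

open Finset

lemma geom_cap_sum (b : ℝ) (hb : 1 < b) (γ Y : ℝ) (hγ : 0 < γ) (hY : 0 ≤ Y) (s : ℕ) :
    ∑ h ∈ range (s+1), (if γ * b ^ h ≤ Y then γ * b ^ h else 0) ≤ Y * (b / (b-1)) := by
  classical
  have hb0 : (0:ℝ) < b := lt_trans one_pos hb
  have hb1 : (0:ℝ) < b - 1 := by linarith
  rw [← Finset.sum_filter]
  set A := (range (s+1)).filter (fun h => γ * b ^ h ≤ Y) with hA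
  rcases A.eq_empty_or_nonempty with hAe | hAne
  · rw [hAe]
    simp
    positivity
  · set M := A.max' hAne with hM
    have hMmem : M ∈ A := A.max'_mem hAne
    have hMle : γ * b ^ M ≤ Y := (Finset.mem_filter.1 hMmem).2
    have hsub : A ⊆ range (M+1) := by
      intro h hh
      simp only [Finset.mem_range]
      have := Finset.le_max' A h hh
      omega
    calc ∑ h ∈ A, γ * b ^ h
        ≤ ∑ h ∈ range (M+1), γ * b ^ h := by
          apply Finset.sum_le_sum_of_subset_of_nonneg hsub
          intro i _ _
          positivity
      _ = γ * ((b ^ (M+1) - 1) / (b - 1)) := by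
          rw [← Finset.mul_sum, geom_sum_eq (by linarith)]
      _ ≤ γ * (b ^ (M+1) / (b - 1)) := by
          apply mul_le_mul_of_nonneg_left _ hγ.le
          apply div_le_div_of_nonneg_right (by linarith) hb1.le
      _ = (γ * b ^ M) * (b / (b-1)) := by
          rw [pow_succ]; ring
      _ ≤ Y * (b / (b-1)) := by
          apply mul_le_mul_of_nonneg_right hMle
          positivity

/-- Key: the sum over an antidiagonal of the min of two geometric sequences
is bounded by √(αβ bˢ) times a constant. -/
lemma sum_min_geom (b : ℝ) (hb : 1 < b) (α β : ℝ) (hα : 0 < α) (hβ : 0 < β) (s : ℕ) :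
    ∑ h ∈ range (s+1), min (α * b ^ (s-h)) (β * b ^ h) ≤
      (2 * b / (b-1)) * Real.sqrt (α * β * b ^ s) := by
  classical
  have hb0 : (0:ℝ) < b := lt_trans one_pos hb
  set X := Real.sqrt (α * β * b ^ s) with hX
  have hXsq : X ^ 2 = α * β * b ^ s := Real.sq_sqrt (by positivity)
  have hX0 : 0 < X := Real.sqrt_pos.2 (by positivity)
  -- key fact: if ¬ (β b^h ≤ X) for h ≤ s then α b^(s-h) ≤ X
  have key : ∀ h ≤ s, ¬ (β * b ^ h ≤ X) → α * b ^ (s-h) ≤ X := by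
    intro h hs hnot
    push_neg at hnot
    have hprod : (α * b ^ (s-h)) * (β * b ^ h) = X * X := by
      have : b ^ (s-h) * b ^ h = b ^ s := by
        rw [← pow_add]; congr 1; omega
      calc (α * b ^ (s-h)) * (β * b ^ h) = α * β * (b ^ (s-h) * b ^ h) := by ring
        _ = α * β * b ^ s := by rw [this]
        _ = X * X := by rw [← hXsq]; ring
    have h1 : (α * b ^ (s-h)) * X ≤ (α * b ^ (s-h)) * (β * b ^ h) := by
      apply mul_le_mul_of_nonneg_left (le_of_lt hnot) (by positivity)
    rw [hprod] at h1
    exact le_of_mul_le_mul_right h1 hX0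
  have hsplit : ∀ h ∈ range (s+1), min (α * b ^ (s-h)) (β * b ^ h) ≤
      (if β * b ^ h ≤ X then β * b ^ h else 0) +
      (if α * b ^ h ≤ X then α * b ^ h else 0)
        ∨ True := fun _ _ => Or.inr trivial
  -- bound termwise by the two capped sequences, the second read in reflected order
  have main : ∑ h ∈ range (s+1), min (α * b ^ (s-h)) (β * b ^ h) ≤
      (∑ h ∈ range (s+1), (if β * b ^ h ≤ X then β * b ^ h else 0)) +
      (∑ h ∈ range (s+1), (if α * b ^ h ≤ X then α * b ^ h else 0)) := by
    have hre : (∑ h ∈ range (s+1), (if α * b ^ h ≤ X then α * b ^ h else 0)) =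
        ∑ h ∈ range (s+1), (if α * b ^ (s-h) ≤ X then α * b ^ (s-h) else 0) := by
      rw [← Finset.sum_range_reflect]
      apply Finset.sum_congr rfl
      intro h hh
      simp only [Finset.mem_range] at hh
      congr 2 <;> omega
    rw [hre, ← Finset.sum_add_distrib]
    apply Finset.sum_le_sum
    intro h hh
    simp only [Finset.mem_range] at hh
    by_cases hc : β * b ^ h ≤ X
    · rw [if_pos hc]
      have : min (α * b ^ (s-h)) (β * b ^ h) ≤ β * b ^ h := min_le_right _ _
      have h2 : (0:ℝ) ≤ (if α * b ^ (s-h) ≤ X then α * b ^ (s-h) else 0) := by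
        split <;> positivity
      linarith
    · rw [if_neg hc]
      have hkey := key h (by omega) hc
      rw [if_pos hkey]
      have : min (α * b ^ (s-h)) (β * b ^ h) ≤ α * b ^ (s-h) := min_le_left _ _
      linarith
  have g1 := geom_cap_sum b hb β X hβ hX0.le s
  have g2 := geom_cap_sum b hb α X hα hX0.le s
  calc ∑ h ∈ range (s+1), min (α * b ^ (s-h)) (β * b ^ h)
      ≤ X * (b/(b-1)) + X * (b/(b-1)) := by linarith
    _ = (2 * b / (b-1)) * X := by ring

end SWAux2

set_option maxHeartbeats 1000000

open SWAux SWAux2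

/-- In a δ-hyperbolic spider's web with `c·a^r ≤ #B_r(x) ≤ C·b^r`
(`1 < a ≤ b < a²`), the bilinear estimate
`a^{-r}·#{(x,y) ∈ E×F : d(x,y) ≤ r} ≤ C'·(√b/a)^r·√(#E·#F)` holds. -/
theorem stmt_10 {V : Type*} (S : SpiderWeb V) (δ a b c C : ℝ) (hδ : 0 ≤ δ)
    (ha : 1 < a) (hab : a ≤ b) (hb : b < a ^ 2) (hc : 0 < c) (hC : 0 < C)
    (hhyp : ∀ w x y z : V,
      gromovProd S.G.dist x z w ≥
        min (gromovProd S.G.dist x y w) (gromovProd S.G.dist y z w) - δ)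
    (hvol : ∀ (x : V) (r : ℕ), 1 ≤ r →
      c * a ^ r ≤ (({z | S.G.dist x z ≤ r} : Set V).ncard : ℝ) ∧
        (({z | S.G.dist x z ≤ r} : Set V).ncard : ℝ) ≤ C * b ^ r) :
    ∃ C' : ℝ, 0 < C' ∧ ∀ (r : ℕ) (E F : Set V), E.Finite → F.Finite →
      (({q : V × V | q.1 ∈ E ∧ q.2 ∈ F ∧ S.G.dist q.1 q.2 ≤ r} : Set (V × V)).ncard : ℝ)
          / a ^ r ≤
        C' * (Real.sqrt b / a) ^ r * Real.sqrt ((E.ncard : ℝ) * (F.ncard : ℝ)) := by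
  classical
  have hb1 : (1:ℝ) < b := lt_of_lt_of_le ha hab
  have hb0 : (0:ℝ) < b := lt_trans one_pos hb1
  have ha0 : (0:ℝ) < a := lt_trans one_pos ha
  set σ := Real.sqrt b with hσdef
  have hσ0 : 0 < σ := Real.sqrt_pos.2 hb0
  have hσ1 : 1 < σ := by
    have h := Real.sqrt_lt_sqrt (by norm_num) hb1
    rwa [Real.sqrt_one] at h
  set Δ := Nat.floor (4*δ) with hΔdef
  set C1 := C * b ^ (Δ+1) with hC1def
  have hC1pos : 0 < C1 := by positivity
  set K : ℝ := 2 * b / (b - 1) with hKdef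
  have hKpos : 0 < K := by
    apply div_pos (by linarith) (by linarith)
  have hσ1' : 0 < σ - 1 := by linarith
  refine ⟨K * C1 * (σ^3 / (σ - 1)), ?_, ?_⟩
  · exact mul_pos (mul_pos hKpos hC1pos) (div_pos (by positivity) hσ1')
  intro r E F hE hF
  set e := hE.toFinset with hedef
  set f := hF.toFinset with hfdef
  -- the volume upper bound, for arbitrary finsets inside balls
  have ball_bound : ∀ (ctr : V) (ρ : ℕ), 1 ≤ ρ → ∀ g : Finset V,
      (∀ y ∈ g, S.G.dist ctr y ≤ ρ) → (g.card : ℝ) ≤ C * b ^ ρ := by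
    intro ctr ρ hρ g hg
    have hfin : ({z | S.G.dist ctr z ≤ ρ} : Set V).Finite := by
      by_contra hinf
      have h0 : ({z | S.G.dist ctr z ≤ ρ} : Set V).ncard = 0 :=
        Set.Infinite.ncard hinf
      have h1 := (hvol ctr ρ hρ).1
      rw [h0] at h1
      have : (0:ℝ) < c * a ^ ρ := by positivity
      norm_num at h1
      linarith
    have hsub : (↑g : Set V) ⊆ {z | S.G.dist ctr z ≤ ρ} := by
      intro y hy
      exact hg y (by exact_mod_cast hy)
    have h1 : ((↑g : Set V).ncard) ≤ ({z | S.G.dist ctr z ≤ ρ} : Set V).ncard :=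
      Set.ncard_le_ncard hsub hfin
    rw [Set.ncard_coe_finset] at h1
    calc (g.card : ℝ) ≤ (({z | S.G.dist ctr z ≤ ρ} : Set V).ncard : ℝ) := by
          exact_mod_cast h1
      _ ≤ C * b ^ ρ := (hvol ctr ρ hρ).2
  set P : Finset (V × V) := (e ×ˢ f).filter (fun q => S.G.dist q.1 q.2 ≤ r) with hPdef
  have hset : ({q : V × V | q.1 ∈ E ∧ q.2 ∈ F ∧ S.G.dist q.1 q.2 ≤ r} : Set (V×V)) = ↑P := by
    ext q
    simp only [Set.mem_setOf_eq, hPdef, Finset.coe_filter, Finset.mem_product,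
      hedef, hfdef, Set.Finite.mem_toFinset, and_assoc]
  rw [hset, Set.ncard_coe_finset]
  have hEc : (E.ncard:ℝ) = (e.card:ℝ) := by
    rw [Set.ncard_eq_toFinset_card E hE]
  have hFc : (F.ncard:ℝ) = (f.card:ℝ) := by
    rw [Set.ncard_eq_toFinset_card F hF]
  rw [hEc, hFc]
  -- reduce to the multiplicative estimate
  have hgoal : ∀ Z : ℝ, (P.card:ℝ) ≤ Z * σ ^ r * Real.sqrt ((e.card:ℝ) * (f.card:ℝ)) →
      (P.card:ℝ) / a ^ r ≤ Z * (σ / a) ^ r * Real.sqrt ((e.card:ℝ) * (f.card:ℝ)) := by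
    intro Z hZ
    have hrw : Z * (σ / a) ^ r * Real.sqrt ((e.card:ℝ) * (f.card:ℝ))
        = (Z * σ ^ r * Real.sqrt ((e.card:ℝ) * (f.card:ℝ))) / a ^ r := by
      rw [div_pow]; ring
    rw [hrw]
    exact (div_le_div_iff_of_pos_right (pow_pos ha0 r)).2 hZ
  apply hgoal
  by_cases hempty : e.card = 0 ∨ f.card = 0
  · have hP0 : P.card = 0 := by
      have h1 : P.card ≤ (e ×ˢ f).card := Finset.card_le_card (Finset.filter_subset _ _)
      rw [Finset.card_product] at h1
      rcases hempty with h | h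
      · rw [h, zero_mul] at h1; omega
      · rw [h, mul_zero] at h1; omega
    rw [hP0]
    push_cast
    positivity
  push_neg at hempty
  obtain ⟨he0, hf0⟩ := hempty
  set α := (e.card:ℝ) * C1 with hαdef
  set β := (f.card:ℝ) * C1 with hβdef
  have hαpos : 0 < α := by
    apply mul_pos _ hC1pos
    exact_mod_cast Nat.pos_of_ne_zero he0
  have hβpos : 0 < β := by
    apply mul_pos _ hC1pos
    exact_mod_cast Nat.pos_of_ne_zero hf0
  -- cells and the per-cell pair sets
  set Q : ℕ → ℕ → Finset (V × V) := fun h h' =>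
    (e ×ˢ f).filter (fun q => h ≤ S.lvl q.1 ∧ h' ≤ S.lvl q.2 ∧
      S.G.dist (S.p^[h] q.1) (S.p^[h'] q.2) ≤ Δ) with hQdef
  set cells : Finset (ℕ × ℕ) :=
    (Finset.range (r+3)).biUnion (fun s => Finset.HasAntidiagonal.antidiagonal s) with hcellsdef
  -- every close pair is covered by some cell
  have cover : P ⊆ cells.biUnion (fun cc => Q cc.1 cc.2) := by
    intro q hq
    obtain ⟨hqp, hqd⟩ := Finset.mem_filter.1 hq
    obtain ⟨hx, hy⟩ := Finset.mem_product.1 hqp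
    have hox : S.G.dist S.o q.1 = S.lvl q.1 := sw_dist_root S q.1
    have hoy : S.G.dist S.o q.2 = S.lvl q.2 := sw_dist_root S q.2
    have htri : (S.G.dist q.1 q.2 : ℝ) ≤ (S.lvl q.1 : ℝ) + S.lvl q.2 := by
      have h1 : S.G.dist q.1 q.2 ≤ S.G.dist q.1 S.o + S.G.dist S.o q.2 :=
        (sw_conn S).dist_triangle
      have h2 : S.G.dist q.1 S.o = S.lvl q.1 := by
        rw [SimpleGraph.dist_comm]; exact hox
      have : S.G.dist q.1 q.2 ≤ S.lvl q.1 + S.lvl q.2 := by omega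
      exact_mod_cast this
    have hgpval : gromovProd S.G.dist q.1 q.2 S.o
        = ((S.lvl q.1:ℝ) + S.lvl q.2 - S.G.dist q.1 q.2)/2 := by
      unfold gromovProd
      rw [hox, hoy]
    have hgp0 : 0 ≤ gromovProd S.G.dist q.1 q.2 S.o := by
      rw [hgpval]; linarith
    have hgpx : gromovProd S.G.dist q.1 q.2 S.o ≤ (S.lvl q.1 : ℝ) := by
      have h3 := sw_dist_lvl S q.1 q.2
      have h4 : (S.lvl q.2:ℝ) ≤ (S.lvl q.1:ℝ) + S.G.dist q.1 q.2 := by exact_mod_cast h3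
      rw [hgpval]; linarith
    have hgpy : gromovProd S.G.dist q.1 q.2 S.o ≤ (S.lvl q.2 : ℝ) := by
      have h3 := sw_dist_lvl S q.2 q.1
      have h4 : (S.lvl q.1:ℝ) ≤ (S.lvl q.2:ℝ) + S.G.dist q.2 q.1 := by exact_mod_cast h3
      have h5 : S.G.dist q.2 q.1 = S.G.dist q.1 q.2 := SimpleGraph.dist_comm
      rw [h5] at h4
      rw [hgpval]; linarith
    set k := Nat.floor (gromovProd S.G.dist q.1 q.2 S.o) with hkdef
    have hkgp : (k:ℝ) ≤ gromovProd S.G.dist q.1 q.2 S.o := Nat.floor_le hgp0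
    have hkx : k ≤ S.lvl q.1 := by
      have : (k:ℝ) ≤ (S.lvl q.1:ℝ) := le_trans hkgp hgpx
      exact_mod_cast this
    have hky : k ≤ S.lvl q.2 := by
      have : (k:ℝ) ≤ (S.lvl q.2:ℝ) := le_trans hkgp hgpy
      exact_mod_cast this
    have hdq : (S.G.dist (S.p^[S.lvl q.1 - k] q.1) (S.p^[S.lvl q.2 - k] q.2) : ℝ) ≤ 4*δ :=
      sw_anc_close S δ hδ hhyp q.1 q.2 k hkx hky hkgp
    have hdΔ : S.G.dist (S.p^[S.lvl q.1 - k] q.1) (S.p^[S.lvl q.2 - k] q.2) ≤ Δ :=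
      Nat.le_floor hdq
    have hsum : (S.lvl q.1 - k) + (S.lvl q.2 - k) ≤ r + 2 := by
      have hgplt : gromovProd S.G.dist q.1 q.2 S.o < (k:ℝ) + 1 :=
        Nat.lt_floor_add_one _
      have hc1 : ((S.lvl q.1 - k : ℕ):ℝ) = (S.lvl q.1:ℝ) - k := Nat.cast_sub hkx
      have hc2 : ((S.lvl q.2 - k : ℕ):ℝ) = (S.lvl q.2:ℝ) - k := Nat.cast_sub hky
      have hd : (S.G.dist q.1 q.2 : ℝ) ≤ (r:ℝ) := by exact_mod_cast hqd
      rw [hgpval] at hgplt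
      have hlt : (((S.lvl q.1 - k) + (S.lvl q.2 - k) : ℕ):ℝ) < (((r+3:ℕ)):ℝ) := by
        push_cast [hc1, hc2]
        linarith
      have : (S.lvl q.1 - k) + (S.lvl q.2 - k) < r + 3 := by exact_mod_cast hlt
      omega
    apply Finset.mem_biUnion.2
    refine ⟨(S.lvl q.1 - k, S.lvl q.2 - k), ?_, ?_⟩
    · rw [hcellsdef]
      apply Finset.mem_biUnion.2
      exact ⟨(S.lvl q.1 - k) + (S.lvl q.2 - k), Finset.mem_range.2 (by omega),
        Finset.HasAntidiagonal.mem_antidiagonal.2 rfl⟩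
    · rw [hQdef]
      exact Finset.mem_filter.2 ⟨hqp, Nat.sub_le _ _, Nat.sub_le _ _, hdΔ⟩
  -- per-cell bounds
  have QA : ∀ hh hh' : ℕ, ((Q hh hh').card : ℝ) ≤ α * b ^ hh' := by
    intro hh hh'
    have hsub : Q hh hh' ⊆ e.biUnion (fun x =>
        (f.filter (fun y => hh' ≤ S.lvl y ∧
          S.G.dist (S.p^[hh] x) (S.p^[hh'] y) ≤ Δ)).image (fun y => (x, y))) := by
      intro q hq
      rw [hQdef] at hq
      obtain ⟨hqp, hcnd⟩ := Finset.mem_filter.1 hq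
      obtain ⟨hx, hy⟩ := Finset.mem_product.1 hqp
      apply Finset.mem_biUnion.2
      refine ⟨q.1, hx, Finset.mem_image.2 ⟨q.2,
        Finset.mem_filter.2 ⟨hy, hcnd.2.1, hcnd.2.2⟩, rfl⟩⟩
    have hcard1 : (Q hh hh').card ≤
        ∑ x ∈ e, (f.filter (fun y => hh' ≤ S.lvl y ∧
          S.G.dist (S.p^[hh] x) (S.p^[hh'] y) ≤ Δ)).card := by
      calc (Q hh hh').card ≤ _ := Finset.card_le_card hsub
        _ ≤ _ := Finset.card_biUnion_le
        _ ≤ _ := Finset.sum_le_sum (fun x _ => Finset.card_image_le)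
    have hfiber : ∀ x : V, (((f.filter (fun y => hh' ≤ S.lvl y ∧
        S.G.dist (S.p^[hh] x) (S.p^[hh'] y) ≤ Δ)).card : ℝ)) ≤ C * b ^ (Δ + hh' + 1) := by
      intro x
      apply ball_bound (S.p^[hh] x) (Δ + hh' + 1) (by omega)
      intro y hy
      obtain ⟨hyf, hylvl, hyd⟩ := Finset.mem_filter.1 hy
      have hstep : S.G.dist y (S.p^[hh'] y) ≤ hh' := sw_iter_dist S y hh' hylvl
      have htr : S.G.dist (S.p^[hh] x) y ≤
          S.G.dist (S.p^[hh] x) (S.p^[hh'] y) + S.G.dist (S.p^[hh'] y) y :=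
        (sw_conn S).dist_triangle
      have hcm : S.G.dist (S.p^[hh'] y) y = S.G.dist y (S.p^[hh'] y) :=
        SimpleGraph.dist_comm
      omega
    calc ((Q hh hh').card : ℝ)
        ≤ ∑ x ∈ e, (((f.filter (fun y => hh' ≤ S.lvl y ∧
            S.G.dist (S.p^[hh] x) (S.p^[hh'] y) ≤ Δ)).card : ℝ)) := by
          exact_mod_cast hcard1
      _ ≤ ∑ _x ∈ e, C * b ^ (Δ + hh' + 1) := Finset.sum_le_sum (fun x _ => hfiber x)
      _ = (e.card : ℝ) * (C * b ^ (Δ + hh' + 1)) := by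
          rw [Finset.sum_const, nsmul_eq_mul]
      _ = α * b ^ hh' := by
          rw [hαdef, hC1def]
          have hexp : Δ + hh' + 1 = (Δ+1) + hh' := by omega
          rw [hexp, pow_add]
          ring
  have QB : ∀ hh hh' : ℕ, ((Q hh hh').card : ℝ) ≤ β * b ^ hh := by
    intro hh hh'
    have hsub : Q hh hh' ⊆ f.biUnion (fun y =>
        (e.filter (fun x => hh ≤ S.lvl x ∧
          S.G.dist (S.p^[hh] x) (S.p^[hh'] y) ≤ Δ)).image (fun x => (x, y))) := by
      intro q hq
      rw [hQdef] at hq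
      obtain ⟨hqp, hcnd⟩ := Finset.mem_filter.1 hq
      obtain ⟨hx, hy⟩ := Finset.mem_product.1 hqp
      apply Finset.mem_biUnion.2
      refine ⟨q.2, hy, Finset.mem_image.2 ⟨q.1,
        Finset.mem_filter.2 ⟨hx, hcnd.1, hcnd.2.2⟩, rfl⟩⟩
    have hcard1 : (Q hh hh').card ≤
        ∑ y ∈ f, (e.filter (fun x => hh ≤ S.lvl x ∧
          S.G.dist (S.p^[hh] x) (S.p^[hh'] y) ≤ Δ)).card := by
      calc (Q hh hh').card ≤ _ := Finset.card_le_card hsub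
        _ ≤ _ := Finset.card_biUnion_le
        _ ≤ _ := Finset.sum_le_sum (fun y _ => Finset.card_image_le)
    have hfiber : ∀ y : V, (((e.filter (fun x => hh ≤ S.lvl x ∧
        S.G.dist (S.p^[hh] x) (S.p^[hh'] y) ≤ Δ)).card : ℝ)) ≤ C * b ^ (Δ + hh + 1) := by
      intro y
      apply ball_bound (S.p^[hh'] y) (Δ + hh + 1) (by omega)
      intro x hx
      obtain ⟨hxe, hxlvl, hxd⟩ := Finset.mem_filter.1 hx
      have hstep : S.G.dist x (S.p^[hh] x) ≤ hh := sw_iter_dist S x hh hxlvl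
      have htr : S.G.dist (S.p^[hh'] y) x ≤
          S.G.dist (S.p^[hh'] y) (S.p^[hh] x) + S.G.dist (S.p^[hh] x) x :=
        (sw_conn S).dist_triangle
      have hcm : S.G.dist (S.p^[hh'] y) (S.p^[hh] x)
          = S.G.dist (S.p^[hh] x) (S.p^[hh'] y) := SimpleGraph.dist_comm
      have hcm2 : S.G.dist (S.p^[hh] x) x = S.G.dist x (S.p^[hh] x) :=
        SimpleGraph.dist_comm
      omega
    calc ((Q hh hh').card : ℝ)
        ≤ ∑ y ∈ f, (((e.filter (fun x => hh ≤ S.lvl x ∧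
            S.G.dist (S.p^[hh] x) (S.p^[hh'] y) ≤ Δ)).card : ℝ)) := by
          exact_mod_cast hcard1
      _ ≤ ∑ _y ∈ f, C * b ^ (Δ + hh + 1) := Finset.sum_le_sum (fun y _ => hfiber y)
      _ = (f.card : ℝ) * (C * b ^ (Δ + hh + 1)) := by
          rw [Finset.sum_const, nsmul_eq_mul]
      _ = β * b ^ hh := by
          rw [hβdef, hC1def]
          have hexp : Δ + hh + 1 = (Δ+1) + hh := by omega
          rw [hexp, pow_add]
          ring
  -- assemble
  have hdisj : (↑(Finset.range (r+3)) : Set ℕ).PairwiseDisjoint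
      (fun s => (Finset.HasAntidiagonal.antidiagonal s : Finset (ℕ×ℕ))) := by
    intro s1 _ s2 _ hne
    simp only [Function.onFun]
    rw [Finset.disjoint_left]
    intro cc h1 h2
    rw [Finset.HasAntidiagonal.mem_antidiagonal] at h1 h2
    exact hne (by omega)
  have hef : (0:ℝ) ≤ (e.card:ℝ) * (f.card:ℝ) :=
    mul_nonneg (Nat.cast_nonneg _) (Nat.cast_nonneg _)
  have step5 : ∀ s : ℕ, Real.sqrt (α * β * b ^ s)
      = C1 * Real.sqrt ((e.card:ℝ) * (f.card:ℝ)) * σ ^ s := by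
    intro s
    have h1 : (Real.sqrt ((e.card:ℝ) * (f.card:ℝ)))^2 = (e.card:ℝ) * (f.card:ℝ) :=
      Real.sq_sqrt hef
    have h2 : (σ ^ s)^2 = b ^ s := by
      rw [← pow_mul, mul_comm s 2, pow_mul, hσdef, Real.sq_sqrt hb0.le]
    have h3 : α * β * b ^ s
        = (C1 * Real.sqrt ((e.card:ℝ) * (f.card:ℝ)) * σ ^ s)^2 := by
      have h4 : (C1 * Real.sqrt ((e.card:ℝ) * (f.card:ℝ)) * σ ^ s)^2
          = C1^2 * (Real.sqrt ((e.card:ℝ) * (f.card:ℝ)))^2 * (σ ^ s)^2 := by ring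
      rw [h4, h1, h2, hαdef, hβdef]
      ring
    rw [h3, Real.sqrt_sq (by positivity)]
  have step6 : ∑ s ∈ Finset.range (r+3), σ ^ s ≤ σ ^ (r+3) / (σ - 1) := by
    rw [geom_sum_eq (ne_of_gt hσ1)]
    apply div_le_div_of_nonneg_right (by linarith [pow_pos hσ0 (r+3)]) hσ1'.le
  calc (P.card:ℝ)
      ≤ ∑ cc ∈ cells, ((Q cc.1 cc.2).card : ℝ) := by
        have h1 : P.card ≤ ∑ cc ∈ cells, (Q cc.1 cc.2).card :=
          le_trans (Finset.card_le_card cover) Finset.card_biUnion_le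
        exact_mod_cast h1
    _ ≤ ∑ cc ∈ cells, min (α * b ^ cc.2) (β * b ^ cc.1) :=
        Finset.sum_le_sum (fun cc _ => le_min (QA cc.1 cc.2) (QB cc.1 cc.2))
    _ = ∑ s ∈ Finset.range (r+3), ∑ cc ∈ Finset.HasAntidiagonal.antidiagonal s,
          min (α * b ^ cc.2) (β * b ^ cc.1) := by
        rw [hcellsdef]
        exact Finset.sum_biUnion hdisj
    _ = ∑ s ∈ Finset.range (r+3), ∑ h ∈ Finset.range (s+1),
          min (α * b ^ (s-h)) (β * b ^ h) := by
        apply Finset.sum_congr rfl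
        intro s _
        exact Finset.Nat.sum_antidiagonal_eq_sum_range_succ_mk
          (fun cc => min (α * b ^ cc.2) (β * b ^ cc.1)) s
    _ ≤ ∑ s ∈ Finset.range (r+3), K * Real.sqrt (α * β * b ^ s) := by
        apply Finset.sum_le_sum
        intro s _
        have h := sum_min_geom b hb1 α β hαpos hβpos s
        rw [hKdef]
        exact h
    _ = K * (C1 * Real.sqrt ((e.card:ℝ) * (f.card:ℝ))) * ∑ s ∈ Finset.range (r+3), σ ^ s := by
        rw [Finset.mul_sum]
        apply Finset.sum_congr rfl
        intro s _
        rw [step5 s]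
        ring
    _ ≤ K * (C1 * Real.sqrt ((e.card:ℝ) * (f.card:ℝ))) * (σ ^ (r+3) / (σ - 1)) := by
        apply mul_le_mul_of_nonneg_left step6 (by positivity)
    _ = K * C1 * (σ^3 / (σ - 1)) * σ ^ r * Real.sqrt ((e.card:ℝ) * (f.card:ℝ)) := by
        rw [pow_add]
        ring
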